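/- Let $a_1 \le a_2 \le \cdots \le a_N$ and $b_1 \ge b_2 \ge \cdots \ge b_N$ be integers, and let $\sigma \in S_N$ satisfy $\sigma(i) < \sigma(i+1)$ whenever $a_i = a_{i+1}$ and $\sigma^{-1}(i) < \sigma^{-1}(i+1)$ whenever $b_i = b_{i+1}$. If $\sigma' \le \sigma$ in the Bruhat order on $S_N$, then $\max\{ b_{\sigma'(i)} - a_i : i \in [N] \} \ge \max\{ b_{\sigma(i)} - a_i : i \in [N] \}$. -/

import Mathlib

/-- Number of inversions of a permutation of `Fin N`. -/
def invCount {N : ℕ} (σ : Equiv.Perm (Fin N)) : ℕ :=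
  (Finset.univ.filter (fun p : Fin N × Fin N => p.1 < p.2 ∧ σ p.2 < σ p.1)).card

/-- One step up in the Bruhat order: multiply by a transposition, increasing length. -/
def BruhatStep {N : ℕ} (τ τ' : Equiv.Perm (Fin N)) : Prop :=
  ∃ i j : Fin N, τ' = τ * Equiv.swap i j ∧ invCount τ < invCount τ'

/-- Bruhat order on the symmetric group `S_N`. -/
def BruhatLE {N : ℕ} (σ' σ : Equiv.Perm (Fin N)) : Prop :=
  Relation.ReflTransGen BruhatStep σ' σ

lemma invCount_le_mul_swap {N : ℕ} (π : Equiv.Perm (Fin N)) (i j : Fin N)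
    (hij : i < j) (hπ : π i < π j) :
    invCount π ≤ invCount (π * Equiv.swap i j) := by
  classical
  set s := Equiv.swap i j with hs
  apply Finset.card_le_card_of_injOn
    (fun x : Fin N × Fin N => if s x.1 < s x.2 then (s x.1, s x.2) else x)
  · intro x hx
    obtain ⟨x1, x2⟩ := x
    simp only [Finset.mem_coe, Finset.mem_filter, Finset.mem_univ, true_and] at hx ⊢
    obtain ⟨h1, h2⟩ := hx
    by_cases hss : s x1 < s x2
    · simp only [if_pos hss]
      simp only [if_pos hss, Equiv.Perm.mul_apply, hs, Equiv.swap_apply_self]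
      exact ⟨hss, h2⟩
    · simp only [if_neg hss, Equiv.Perm.mul_apply]
      refine ⟨h1, ?_⟩
      by_cases e1i : x1 = i
      · by_cases e2j : x2 = j
        · rw [e1i, e2j, hs, Equiv.swap_apply_left, Equiv.swap_apply_right]
          exact hπ
        · have e2i : x2 ≠ i := fun h => absurd (h ▸ h1) (by simp [e1i, h])
          rw [e1i, hs, Equiv.swap_apply_left, Equiv.swap_apply_of_ne_of_ne e2i e2j]
          calc π x2 < π i := e1i ▸ h2
            _ < π j := hπ
      · by_cases e1j : x1 = j
        · exfalso
          rw [e1j] at h1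
          have e2i : x2 ≠ i := by rintro rfl; exact absurd h1 (not_lt.mpr hij.le)
          have e2j : x2 ≠ j := by rintro rfl; exact lt_irrefl _ h1
          rw [e1j, hs, Equiv.swap_apply_right, Equiv.swap_apply_of_ne_of_ne e2i e2j] at hss
          exact hss (lt_trans hij h1)
        · by_cases e2i : x2 = i
          · exfalso
            rw [hs, Equiv.swap_apply_of_ne_of_ne e1i e1j, e2i, Equiv.swap_apply_left] at hss
            exact hss (lt_trans (e2i ▸ h1) hij)
          · by_cases e2j : x2 = j
            · rw [e2j, hs, Equiv.swap_apply_right,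
                Equiv.swap_apply_of_ne_of_ne e1i e1j]
              calc π i < π j := hπ
                _ < π x1 := e2j ▸ h2
            · exfalso
              rw [hs, Equiv.swap_apply_of_ne_of_ne e1i e1j,
                Equiv.swap_apply_of_ne_of_ne e2i e2j] at hss
              exact hss h1
  · intro x hx y hy hxy
    simp only [Finset.mem_coe, Finset.mem_filter, Finset.mem_univ, true_and] at hx hy
    by_cases hx' : s x.1 < s x.2 <;> by_cases hy' : s y.1 < s y.2 <;>
      simp only [if_pos, if_neg, hx', hy', if_true, if_false] at hxy
    · have h1 : x.1 = y.1 := s.injective (by rw [Prod.ext_iff] at hxy; exact hxy.1)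
      have h2 : x.2 = y.2 := s.injective (by rw [Prod.ext_iff] at hxy; exact hxy.2)
      exact Prod.ext h1 h2
    · exfalso
      rw [Prod.ext_iff] at hxy
      apply hy'
      rw [← hxy.1, ← hxy.2]
      simpa [hs, Equiv.swap_apply_self] using hx.1
    · exfalso
      rw [Prod.ext_iff] at hxy
      apply hx'
      rw [hxy.1, hxy.2]
      simpa [hs, Equiv.swap_apply_self] using hy.1
    · exact hxy

lemma step_values_lt {N : ℕ} (τ τ' : Equiv.Perm (Fin N)) (i j : Fin N)
    (hij : i < j) (hτ' : τ' = τ * Equiv.swap i j) (hlt : invCount τ < invCount τ') :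
    τ i < τ j := by
  rcases lt_trichotomy (τ i) (τ j) with h | h | h
  · exact h
  · exact absurd (τ.injective h) (ne_of_lt hij)
  · exfalso
    have h1 : τ' i < τ' j := by
      rw [hτ']
      simp [Equiv.Perm.mul_apply, Equiv.swap_apply_left, Equiv.swap_apply_right]
      exact h
    have h2 : τ' * Equiv.swap i j = τ := by
      rw [hτ', mul_assoc, Equiv.swap_mul_self, mul_one]
    have := invCount_le_mul_swap τ' i j hij h1
    rw [h2] at this
    omega

lemma step_sup_le {N : ℕ} (hN : 0 < N) (a b : Fin N → ℤ)
    (ha : ∀ i j : Fin N, i ≤ j → a i ≤ a j)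
    (hb : ∀ i j : Fin N, i ≤ j → b j ≤ b i)
    (τ τ' : Equiv.Perm (Fin N)) (h : BruhatStep τ τ') :
    Finset.univ.sup' ⟨⟨0, hN⟩, Finset.mem_univ _⟩ (fun i => b (τ' i) - a i) ≤
      Finset.univ.sup' ⟨⟨0, hN⟩, Finset.mem_univ _⟩ (fun i => b (τ i) - a i) := by
  obtain ⟨i, j, hτ', hlt⟩ := h
  have hij : i ≠ j := by
    rintro rfl
    rw [Equiv.swap_self] at hτ'
    have : τ' = τ := by rw [hτ']; exact mul_one τ
    rw [this] at hlt; exact lt_irrefl _ hlt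
  -- wlog i < j
  suffices H : ∀ i j : Fin N, i < j → τ' = τ * Equiv.swap i j →
      Finset.univ.sup' ⟨⟨0, hN⟩, Finset.mem_univ _⟩ (fun i => b (τ' i) - a i) ≤
        Finset.univ.sup' ⟨⟨0, hN⟩, Finset.mem_univ _⟩ (fun i => b (τ i) - a i) by
    rcases hij.lt_or_gt with hlt' | hlt'
    · exact H i j hlt' hτ'
    · exact H j i hlt' (by rw [hτ', Equiv.swap_comm])
  intro i j hij' hτ'2
  have hv : τ i < τ j := step_values_lt τ τ' i j hij' hτ'2 hlt
  apply Finset.sup'_le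
  intro k _
  by_cases hki : k = i
  · subst hki
    have : τ' k = τ j := by rw [hτ'2]; simp [Equiv.Perm.mul_apply]
    rw [this]
    calc b (τ j) - a k ≤ b (τ k) - a k := by
          have := hb (τ k) (τ j) hv.le; omega
      _ ≤ _ := Finset.le_sup' (fun m => b (τ m) - a m) (Finset.mem_univ k)
  · by_cases hkj : k = j
    · subst hkj
      have : τ' k = τ i := by rw [hτ'2]; simp [Equiv.Perm.mul_apply]
      rw [this]
      calc b (τ i) - a k ≤ b (τ i) - a i := by
            have := ha i k hij'.le; omega
        _ ≤ _ := Finset.le_sup' (fun m => b (τ m) - a m) (Finset.mem_univ i)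
    · have : τ' k = τ k := by
        rw [hτ'2]; simp [Equiv.Perm.mul_apply, Equiv.swap_apply_of_ne_of_ne hki hkj]
      rw [this]
      exact Finset.le_sup' (fun m => b (τ m) - a m) (Finset.mem_univ k)

theorem stmt0 {N : ℕ} (hN : 0 < N) (a b : Fin N → ℤ)
    (ha : ∀ i j : Fin N, i ≤ j → a i ≤ a j)
    (hb : ∀ i j : Fin N, i ≤ j → b j ≤ b i)
    (σ σ' : Equiv.Perm (Fin N))
    (hσa : ∀ i j : Fin N, i < j → a i = a j → σ i < σ j)
    (hσb : ∀ i j : Fin N, i < j → b i = b j → σ⁻¹ i < σ⁻¹ j)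
    (hle : BruhatLE σ' σ) :
    Finset.univ.sup' ⟨⟨0, hN⟩, Finset.mem_univ _⟩ (fun i => b (σ i) - a i) ≤
      Finset.univ.sup' ⟨⟨0, hN⟩, Finset.mem_univ _⟩ (fun i => b (σ' i) - a i) := by
  clear hσa hσb
  induction hle with
  | refl => exact le_refl _
  | tail _ hstep ih =>
    exact le_trans (step_sup_le hN a b ha hb _ _ hstep) ih
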